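/- Perturbation bound at y* for the hybrid loss (corrected inequality (11) in the proof of Theorem 1): In the perturbation setup, for every α ∈ [0,1], ℓ_α(p,y*) − ℓ_α(q,y*) > ε·(2−α)/(p y* + ε). -/

import Mathlib

open Real

/-- The maximum of `p` over all labels different from `y`
(as a supremum, which for a finite nonempty label set equals the maximum). -/
noncomputable def maxNe {Y : Type*} (p : Y → ℝ) (y : Y) : ℝ :=
  sSup {x : ℝ | ∃ y' : Y, y' ≠ y ∧ p y' = x}

/-- The multiclass hinge loss of a (strictly positive) distribution `p` at label `y`. -/
noncomputable def hingeLoss {Y : Type*} (p : Y → ℝ) (y : Y) : ℝ :=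
  max 0 (1 - Real.log (p y / maxNe p y))

/-- The log loss of a (strictly positive) distribution `p` at label `y`. -/
noncomputable def logLoss {Y : Type*} (p : Y → ℝ) (y : Y) : ℝ :=
  - Real.log (p y)

/-- The hybrid loss with mixture parameter `α`. -/
noncomputable def hybridLoss {Y : Type*} (α : ℝ) (p : Y → ℝ) (y : Y) : ℝ :=
  α * logLoss p y + (1 - α) * hingeLoss p y

/-- The conditional risk `L_α(p, D) = ∑ y, D y * ℓ_α(p, y)`. -/
noncomputable def condRisk {Y : Type*} [Fintype Y] (α : ℝ) (p D : Y → ℝ) : ℝ :=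
  ∑ y, D y * hybridLoss α p y

/-- `D` is a distribution over `Y`. -/
def IsDist {Y : Type*} [Fintype Y] (D : Y → ℝ) : Prop :=
  (∀ y, 0 ≤ D y) ∧ ∑ y, D y = 1

/-- `p` is a strictly positive distribution over `Y`. -/
def IsPosDist {Y : Type*} [Fintype Y] (p : Y → ℝ) : Prop :=
  (∀ y, 0 < p y) ∧ ∑ y, p y = 1


lemma maxNe_eq' {Y : Type*} (f : Y → ℝ) (y0 y1 : Y) (h1 : y1 ≠ y0)
    (hub : ∀ y', y' ≠ y0 → f y' ≤ f y1) : maxNe f y0 = f y1 := by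
  apply IsGreatest.csSup_eq
  constructor
  · exact ⟨y1, h1, rfl⟩
  · rintro x ⟨y', hy', rfl⟩; exact hub y' hy'

/-- Perturbation bound at y* for the hybrid loss (corrected inequality (11)). -/
theorem perturbation_bound_hybrid_at_ystar {Y : Type*} [Fintype Y]
    (hcard : 1 < Fintype.card Y)
(p : Y → ℝ) (hp : IsPosDist p)
    (t ystar : Y) (hne : t ≠ ystar) (hpt : p t = p ystar)
    (hlt : ∀ y, y ≠ t → y ≠ ystar → p y < p t)
    (ε : ℝ) (hε0 : 0 < ε) (hεpt : ε < p t)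
    (hεlt : ∀ y, y ≠ t → y ≠ ystar → p y < p t - ε)
    (q : Y → ℝ) (hqstar : q ystar = p ystar + ε) (hqt : q t = p t - ε)
    (hq : ∀ y, y ≠ t → y ≠ ystar → q y = p y)
    (α : ℝ) (hα : α ∈ Set.Icc (0 : ℝ) 1) :
    ε * (2 - α) / (p ystar + ε) < hybridLoss α p ystar - hybridLoss α q ystar := by
  obtain ⟨hα0, hα1⟩ := hα
  have ha : 0 < p ystar := hp.1 ystar
  have hεa : ε < p ystar := hpt ▸ hεpt
  have hs : 0 < p ystar + ε := by linarith
  have hd : 0 < p ystar - ε := by linarith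
  have hmp : maxNe p ystar = p t := by
    apply maxNe_eq' p ystar t hne
    intro y' hy'
    by_cases h : y' = t
    · subst h; exact le_rfl
    · exact (hlt y' h hy').le
  have hmq : maxNe q ystar = p t - ε := by
    rw [← hqt]
    apply maxNe_eq' q ystar t hne
    intro y' hy'
    by_cases h : y' = t
    · subst h; exact le_rfl
    · rw [hq y' h hy', hqt]; exact (hεlt y' h hy').le
  have hhp : hingeLoss p ystar = 1 := by
    rw [hingeLoss, hmp, hpt, div_self ha.ne', Real.log_one]
    norm_num
  set L : ℝ := Real.log ((p ystar + ε) / (p ystar - ε)) with hL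
  have hhq : hingeLoss q ystar = max 0 (1 - L) := by
    rw [hingeLoss, hmq, hqstar, hpt]
  have key1 : ε / (p ystar + ε) < Real.log ((p ystar + ε) / p ystar) := by
    have hne1 : p ystar / (p ystar + ε) ≠ 1 := by
      intro h
      have := (div_eq_one_iff_eq hs.ne').mp h
      linarith
    have h := Real.log_lt_sub_one_of_pos (div_pos ha hs) hne1
    rw [Real.log_div ha.ne' hs.ne'] at h
    rw [Real.log_div hs.ne' ha.ne']
    have h2 : p ystar / (p ystar + ε) - 1 = -(ε / (p ystar + ε)) := by
      field_simp; ring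
    rw [h2] at h
    linarith
  have key2 : 2 * ε / (p ystar + ε) < L := by
    have hne1 : (p ystar - ε) / (p ystar + ε) ≠ 1 := by
      intro h
      have := (div_eq_one_iff_eq hs.ne').mp h
      linarith
    have h := Real.log_lt_sub_one_of_pos (div_pos hd hs) hne1
    rw [Real.log_div hd.ne' hs.ne'] at h
    rw [hL, Real.log_div hs.ne' hd.ne']
    have h2 : (p ystar - ε) / (p ystar + ε) - 1 = -(2 * ε / (p ystar + ε)) := by
      field_simp; ring
    rw [h2] at h
    linarith
  have hone : 2 * ε / (p ystar + ε) < 1 := by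
    rw [div_lt_one hs]; linarith
  have hmin : 2 * ε / (p ystar + ε) < 1 - max 0 (1 - L) := by
    rcases le_or_gt (1 - L) 0 with h | h
    · rw [max_eq_left h]; linarith
    · rw [max_eq_right h.le]; linarith
  -- rewrite everything
  rw [hybridLoss, hybridLoss, hhp, hhq, logLoss, logLoss, hqstar]
  have hlogd : Real.log ((p ystar + ε) / p ystar)
      = Real.log (p ystar + ε) - Real.log (p ystar) := Real.log_div hs.ne' ha.ne'
  rw [hlogd] at key1
  have htgt : ε * (2 - α) / (p ystar + ε)
      = α * (ε / (p ystar + ε)) + (1 - α) * (2 * ε / (p ystar + ε)) := by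
    field_simp; ring
  rw [htgt]
  rcases eq_or_lt_of_le hα1 with h1 | h1
  · subst h1
    simp only [sub_self, zero_mul]
    nlinarith [key1]
  · have hA : α * (ε / (p ystar + ε)) ≤ α * (Real.log (p ystar + ε) - Real.log (p ystar)) :=
      mul_le_mul_of_nonneg_left key1.le hα0
    have hB : (1 - α) * (2 * ε / (p ystar + ε)) < (1 - α) * (1 - max 0 (1 - L)) :=
      mul_lt_mul_of_pos_left hmin (by linarith)
    nlinarith [hA, hB]
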